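/- Let x_1,…,x_5 be nonzero elements of a field and set x_6 = (x_2 x_5 + x_3 x_4)/x_1. Define f_1 = x_1 x_3 / x_2², f_2 = x_2 x_4 / x_3², f_3 = x_3 x_5 / x_4², and the shifted Casimir f_3' = x_4 x_6 / x_5². Then f_3' = (f_2 f_3 + 1)/(f_1 f_2² f_3²). In particular, under the Somos-5 map the Casimirs transform as f_1 ↦ f_2, f_2 ↦ f_3, f_3 ↦ (f_2 f_3 + 1)/(f_1 f_2² f_3²). -/

import Mathlib

/-- Transformation of the Casimirs `f₁ = x₁x₃/x₂²`, `f₂ = x₂x₄/x₃²`, `f₃ = x₃x₅/x₄²`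
under the Somos-5 map: with `x₆ = (x₂x₅ + x₃x₄)/x₁`, the shifted Casimir
`f₃' = x₄x₆/x₅²` satisfies `f₃' = (f₂f₃ + 1)/(f₁f₂²f₃²)`.  In particular the
Casimirs transform as `f₁ ↦ f₂`, `f₂ ↦ f₃`, `f₃ ↦ (f₂f₃+1)/(f₁f₂²f₃²)`. -/
theorem somos5_casimir_transformation {F : Type*} [Field F]
    (x1 x2 x3 x4 x5 x6 f1 f2 f3 f3' : F)
    (h1 : x1 ≠ 0) (h2 : x2 ≠ 0) (h3 : x3 ≠ 0) (h4 : x4 ≠ 0) (h5 : x5 ≠ 0)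
    (hx6 : x6 = (x2 * x5 + x3 * x4) / x1)
    (hf1 : f1 = x1 * x3 / x2 ^ 2)
    (hf2 : f2 = x2 * x4 / x3 ^ 2)
    (hf3 : f3 = x3 * x5 / x4 ^ 2)
    (hf3' : f3' = x4 * x6 / x5 ^ 2) :
    f3' = (f2 * f3 + 1) / (f1 * f2 ^ 2 * f3 ^ 2) := by
  subst hx6 hf1 hf2 hf3 hf3'
  have hA : x5 ^ 2 ≠ 0 := pow_ne_zero 2 h5
  have hB : x1 * x3 / x2 ^ 2 * (x2 * x4 / x3 ^ 2) ^ 2 * (x3 * x5 / x4 ^ 2) ^ 2 ≠ 0 :=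
    mul_ne_zero (mul_ne_zero (div_ne_zero (mul_ne_zero h1 h3) (pow_ne_zero 2 h2))
      (pow_ne_zero 2 (div_ne_zero (mul_ne_zero h2 h4) (pow_ne_zero 2 h3))))
      (pow_ne_zero 2 (div_ne_zero (mul_ne_zero h3 h5) (pow_ne_zero 2 h4)))
  rw [div_eq_div_iff hA hB]
  field_simp
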